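/- In a commutative triplets structure C = CTS[S,G], the graph G_zig (the subgraph of the replacement product G_rep whose edge relation is given by the operator T = ½P_R + ½P_R P_B) is a lift of G_walk(C): the map E(g,τ) = {τ₁g,τ₂g} restricts to a bijection from the G_zig-neighborhood of every vertex (g,τ) onto the G_walk-neighborhood of E(g,τ). Consequently λ(G_walk(C)) ≤ λ(G_zig). -/

import Mathlib

open scoped Classical BigOperators

/-- The supremum of the "nontrivial" eigenvalues of a matrix: eigenvalues admitting an
eigenvector orthogonal to the constant (uniform) vector. -/
noncomputable def ntSup {W : Type*} [Fintype W] (A : Matrix W W ℝ) : ℝ :=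
  sSup {μ : ℝ | ∃ x : W → ℝ, x ≠ 0 ∧ (∑ v, x v) = 0 ∧ A.mulVec x = μ • x}

/-- The edges (types) `S(1)` of a 2-complex given by its set of triangles. -/
def edgesOf {G : Type*} [DecidableEq G] (tri : Set (Finset G)) : Set (Finset G) :=
  {e | e.card = 2 ∧ ∃ t ∈ tri, e ⊆ t}

/-- `E(g,τ) = {τ₁g, τ₂g}`, the edge of the complex with center `g` and type `τ`. -/
def ed {G : Type*} [Group G] [DecidableEq G] (g : G) (τ : Finset G) : Finset G :=
  τ.image (fun s => s * g)

/-- Adjacency in `L = G_walk(S)`: two distinct types lying in a common triangle. -/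
def Ladj {G : Type*} [DecidableEq G] (tri : Set (Finset G)) (τ τ' : Finset G) : Prop :=
  τ ∈ edgesOf tri ∧ τ' ∈ edgesOf tri ∧ τ ≠ τ' ∧ ∃ t ∈ tri, τ ⊆ t ∧ τ' ⊆ t

/-- The (out-)neighbor relation of `G_zig`, given by `T = ½P_R + ½P_R P_B`:
a red step, or a blue step followed by a red step. -/
def zigAdj {G : Type*} [Group G] [DecidableEq G] (tri : Set (Finset G))
    (p q : G × Finset G) : Prop :=
  (q.1 = p.1 ∧ Ladj tri p.2 q.2) ∨
  (∃ a b : G, p.2 = ({a, b} : Finset G) ∧ q.1 = a * b * p.1 ∧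
    Ladj tri (p.2.image (·⁻¹)) q.2)

/-- Adjacency in `G_walk(C)`: distinct 2-sets lying in a common triangle of `C`. -/
def walkAdj {G : Type*} [Group G] [DecidableEq G] (tri : Set (Finset G))
    (e e' : Finset G) : Prop :=
  e ≠ e' ∧ e.card = 2 ∧ e'.card = 2 ∧ ∃ t ∈ tri, ∃ h : G, e ⊆ ed h t ∧ e' ⊆ ed h t

/-- Vertices of `G_zig` (and of `G_rep`): pairs (center, type). -/
abbrev zigVerts {G : Type*} [DecidableEq G] (tri : Set (Finset G)) :=
  {p : G × Finset G // p.2 ∈ edgesOf tri}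

/-- Vertices of `G_walk(C)`: the edges of the complex `C`. -/
abbrev cWalkVerts {G : Type*} [Group G] [DecidableEq G] (tri : Set (Finset G)) :=
  {e : Finset G // ∃ τ ∈ edgesOf tri, ∃ g : G, e = ed g τ}

/-- Adjacency matrix of `G_zig`. -/
noncomputable def zigMat {G : Type*} [Group G] [DecidableEq G] [Fintype G]
    (tri : Set (Finset G)) : Matrix (zigVerts tri) (zigVerts tri) ℝ :=
  fun p q => if zigAdj tri p.1 q.1 then 1 else 0

/-- Adjacency matrix of `G_walk(C)`. -/
noncomputable def cWalkMat {G : Type*} [Group G] [DecidableEq G] [Fintype G]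
    (tri : Set (Finset G)) : Matrix (cWalkVerts tri) (cWalkVerts tri) ℝ :=
  fun e f => if walkAdj tri e.1 f.1 then 1 else 0

set_option linter.unusedSectionVars false
set_option linter.unusedVariables false
set_option maxHeartbeats 800000

section Aux
variable {G : Type*} [Group G] [DecidableEq G] {tri : Set (Finset G)}

/-- decompose an edge -/
lemma edge_decomp {τ : Finset G} (h : τ ∈ edgesOf tri) :
    ∃ a b : G, a ≠ b ∧ τ = {a, b} := by
  obtain ⟨hc, -⟩ := h
  obtain ⟨a, b, hab, rfl⟩ := Finset.card_eq_two.mp hc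
  exact ⟨a, b, hab, rfl⟩

lemma edge_ne {a b : G} (h : ({a,b} : Finset G) ∈ edgesOf tri) : a ≠ b := by
  intro hab; subst hab
  have := h.1; simp at this

lemma pair_cases {a b c d : G} (hab : a ≠ b) (h : ({a,b} : Finset G) = {c,d}) :
    (c = a ∧ d = b) ∨ (c = b ∧ d = a) := by
  have hc : c ∈ ({a,b} : Finset G) := by rw [h]; simp
  have hd : d ∈ ({a,b} : Finset G) := by rw [h]; simp
  have ha : a ∈ ({c,d} : Finset G) := by rw [← h]; simp
  have hb : b ∈ ({c,d} : Finset G) := by rw [← h]; simp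
  simp only [Finset.mem_insert, Finset.mem_singleton] at hc hd ha hb
  rcases hc with rfl|rfl
  · left; refine ⟨rfl, ?_⟩
    rcases hd with rfl|rfl
    · rcases hb with rfl|rfl
      · exact absurd rfl hab
      · rfl
    · rfl
  · right; refine ⟨rfl, ?_⟩
    rcases hd with rfl|rfl
    · rfl
    · rcases ha with rfl|rfl
      · exact absurd rfl hab
      · rfl

lemma ed_pair (g a b : G) : ed g ({a,b} : Finset G) = {a*g, b*g} := by
  simp [ed]

lemma ed_inj (g : G) {τ τ' : Finset G} (h : ed g τ = ed g τ') : τ = τ' :=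
  Finset.image_injective (fun x y hxy => mul_right_cancel hxy) h

lemma ed_card (g : G) (τ : Finset G) : (ed g τ).card = τ.card :=
  Finset.card_image_of_injective _ (fun x y hxy => mul_right_cancel hxy)

lemma ed_mono (g : G) {σ t : Finset G} (h : σ ⊆ t) : ed g σ ⊆ ed g t :=
  Finset.image_subset_image h

lemma subset_ed {e t : Finset G} {g : G} (h : e ⊆ ed g t) :
    ∃ σ : Finset G, σ ⊆ t ∧ e = ed g σ := by
  refine ⟨e.image (· * g⁻¹), ?_, ?_⟩
  · intro x hx
    simp only [Finset.mem_image] at hx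
    obtain ⟨y, hy, rfl⟩ := hx
    have := h hy
    simp only [ed, Finset.mem_image] at this
    obtain ⟨z, hz, rfl⟩ := this
    simpa using hz
  · simp only [ed, Finset.image_image]
    ext x; simp

lemma inv'_pair (a b : G) : ({a,b} : Finset G).image (·⁻¹) = {a⁻¹, b⁻¹} := by simp

lemma inv'_edge (hC : ∀ a b : G, ({a, b} : Finset G) ∈ edgesOf tri →
      ({a⁻¹, b⁻¹} : Finset G) ∈ edgesOf tri)
    {τ : Finset G} (h : τ ∈ edgesOf tri) : τ.image (·⁻¹) ∈ edgesOf tri := by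
  obtain ⟨a, b, hab, rfl⟩ := edge_decomp h
  rw [inv'_pair]; exact hC a b h

/-- product of the two members of an edge is not 1 -/
lemma edge_prod_ne_one (h0 : ∀ a b : G, ({a, b} : Finset G) ∈ edgesOf tri → b ≠ a⁻¹)
    {a b : G} (h : ({a,b} : Finset G) ∈ edgesOf tri) : a * b ≠ 1 := by
  intro hab
  exact h0 a b h (inv_eq_of_mul_eq_one_right hab).symm

lemma ed_shift (hB : ∀ a b : G, ({a, b} : Finset G) ∈ edgesOf tri → a * b = b * a)
    {a b : G} (h : ({a,b} : Finset G) ∈ edgesOf tri) (g : G) :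
    ed g ({a,b} : Finset G) = ed (a*b*g) (({a,b} : Finset G).image (·⁻¹)) := by
  rw [inv'_pair, ed_pair, ed_pair]
  have hcomm := hB a b h
  have e1 : a⁻¹*(a*b*g) = b*g := by group
  have e2 : b⁻¹*(a*b*g) = a*g := by rw [hcomm]; group
  rw [e1, e2, Finset.pair_comm]

/-- The key "fiber" lemma: a complex edge has exactly two presentations. -/
lemma fiber_lemma (hB : ∀ a b : G, ({a, b} : Finset G) ∈ edgesOf tri → a * b = b * a)
    (hD : ∀ a b a' b' : G, ({a, b} : Finset G) ∈ edgesOf tri →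
      ({a', b'} : Finset G) ∈ edgesOf tri → (a, b) ≠ (a', b') →
      a * b⁻¹ = a' * b'⁻¹ → b' = a⁻¹ ∧ a' = b⁻¹)
    {g g' : G} {σ σ' : Finset G} (hσ : σ ∈ edgesOf tri) (hσ' : σ' ∈ edgesOf tri)
    (h : ed g σ = ed g' σ') :
    (g' = g ∧ σ' = σ) ∨ (∃ a b : G, σ = {a,b} ∧ g' = a*b*g ∧ σ' = σ.image (·⁻¹)) := by
  obtain ⟨a, b, hab, rfl⟩ := edge_decomp hσ
  obtain ⟨a', b', hab', rfl⟩ := edge_decomp hσ'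
  rw [ed_pair, ed_pair] at h
  have h1 : a * g ∈ ({a'*g', b'*g'} : Finset G) := by rw [← h]; simp
  have h2 : b * g ∈ ({a'*g', b'*g'} : Finset G) := by rw [← h]; simp
  simp only [Finset.mem_insert, Finset.mem_singleton] at h1 h2
  have hne : a * g ≠ b * g := fun hh => hab (mul_right_cancel hh)
  rcases h1 with h1 | h1
  · -- a g = a' g'
    have h2' : b * g = b' * g' := by
      rcases h2 with h2 | h2
      · exact absurd (h2.trans h1.symm) (Ne.symm hne)
      · exact h2
    have key : a * b⁻¹ = a' * b'⁻¹ := by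
      have : (a * g) * (b * g)⁻¹ = (a' * g') * (b' * g')⁻¹ := by rw [h1, h2']
      group at this; group; exact this
    by_cases hpq : (a, b) = (a', b')
    · left
      obtain ⟨rfl, rfl⟩ := Prod.mk.injEq .. ▸ Prod.ext_iff.mp hpq
      exact ⟨mul_left_cancel h1.symm, rfl⟩
    · obtain ⟨hb', ha'⟩ := hD a b a' b' hσ hσ' hpq key
      right
      refine ⟨a, b, rfl, ?_, ?_⟩
      · subst ha'; subst hb'
        have : g' = b * (a * g) := by
          rw [h1]; group
        rw [this, ← mul_assoc, ← hB a b hσ]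
      · subst ha'; subst hb'
        rw [inv'_pair]
        exact Finset.pair_comm _ _
  · -- a g = b' g'
    have h2' : b * g = a' * g' := by
      rcases h2 with h2 | h2
      · exact h2
      · exact absurd (h2.trans h1.symm) (Ne.symm hne)
    have key : b * a⁻¹ = a' * b'⁻¹ := by
      have : (b * g) * (a * g)⁻¹ = (a' * g') * (b' * g')⁻¹ := by rw [h1, h2']
      group at this; group; exact this
    have hσba : ({b, a} : Finset G) ∈ edgesOf tri := by
      rwa [Finset.pair_comm]
    by_cases hpq : (b, a) = (a', b')
    · left
      obtain ⟨rfl, rfl⟩ := Prod.mk.injEq .. ▸ Prod.ext_iff.mp hpq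
      exact ⟨mul_left_cancel h2'.symm, (Finset.pair_comm _ _)⟩
    · obtain ⟨hb', ha'⟩ := hD b a a' b' hσba hσ' hpq key
      right
      refine ⟨a, b, rfl, ?_, ?_⟩
      · subst ha'; subst hb'
        have : g' = a * (b * g) := by
          rw [h2']; group
        rw [this, ← mul_assoc]
      · subst ha'; subst hb'
        rw [inv'_pair]

end Aux

section Aux2
variable {G : Type*} [Group G] [DecidableEq G] {tri : Set (Finset G)}

/-- Two edges in a common triangle with the same product coincide. -/
lemma same_prod (h3 : ∀ t ∈ tri, t.card = 3)
    (hB : ∀ a b : G, ({a, b} : Finset G) ∈ edgesOf tri → a * b = b * a)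
    {a b u v : G} (he1 : ({a,b} : Finset G) ∈ edgesOf tri)
    (he2 : ({u,v} : Finset G) ∈ edgesOf tri)
    {t : Finset G} (ht : t ∈ tri) (hs1 : ({a,b} : Finset G) ⊆ t)
    (hs2 : ({u,v} : Finset G) ⊆ t)
    (hprod : a * b = u * v) : ({a,b} : Finset G) = {u,v} := by
  have hab : a ≠ b := edge_ne he1
  have huv : u ≠ v := edge_ne he2
  -- intersection nonempty
  have hcap : (({a,b} : Finset G) ∩ {u,v}).Nonempty := by
    by_contra hcon
    rw [Finset.not_nonempty_iff_eq_empty] at hcon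
    have hcard : (({a,b} : Finset G) ∪ {u,v}).card = 4 := by
      rw [Finset.card_union_of_disjoint (Finset.disjoint_iff_inter_eq_empty.mpr hcon)]
      rw [he1.1, he2.1]
    have hsub : (({a,b} : Finset G) ∪ {u,v}) ⊆ t := Finset.union_subset hs1 hs2
    have := Finset.card_le_card hsub
    rw [hcard, h3 t ht] at this
    omega
  obtain ⟨x, hx⟩ := hcap
  simp only [Finset.mem_inter, Finset.mem_insert, Finset.mem_singleton] at hx
  obtain ⟨hx1, hx2⟩ := hx
  have hBab := hB a b he1
  have hBuv := hB u v he2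
  rcases hx1 with rfl | rfl
  · rcases hx2 with rfl | rfl
    · rw [mul_left_cancel hprod]
    · rw [mul_left_cancel (hprod.trans hBuv)]
      exact Finset.pair_comm _ _
  · rcases hx2 with rfl | rfl
    · rw [mul_left_cancel (hBab.symm.trans hprod)]
      exact Finset.pair_comm _ _
    · rw [mul_right_cancel hprod]

/-- Part 1: the local bijection. -/
lemma bijOn_lift (h3 : ∀ t ∈ tri, t.card = 3)
    (h0 : ∀ a b : G, ({a, b} : Finset G) ∈ edgesOf tri → b ≠ a⁻¹)
    (hB : ∀ a b : G, ({a, b} : Finset G) ∈ edgesOf tri → a * b = b * a)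
    (hC : ∀ a b : G, ({a, b} : Finset G) ∈ edgesOf tri →
      ({a⁻¹, b⁻¹} : Finset G) ∈ edgesOf tri)
    (hD : ∀ a b a' b' : G, ({a, b} : Finset G) ∈ edgesOf tri →
      ({a', b'} : Finset G) ∈ edgesOf tri → (a, b) ≠ (a', b') →
      a * b⁻¹ = a' * b'⁻¹ → b' = a⁻¹ ∧ a' = b⁻¹)
    (p : G × Finset G) (hp : p.2 ∈ edgesOf tri) :
    Set.BijOn (fun q : G × Finset G => ed q.1 q.2)
        {q | zigAdj tri p q} {e | walkAdj tri (ed p.1 p.2) e} := by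
  obtain ⟨g, τ⟩ := p
  simp only at hp
  obtain ⟨a, b, hab, rfl⟩ := edge_decomp hp
  have hab1 : a * b ≠ 1 := edge_prod_ne_one h0 hp
  refine ⟨?_, ?_, ?_⟩
  · -- MapsTo
    rintro ⟨k, σ⟩ (⟨hk, hL⟩ | ⟨a', b', hτ', hk, hL⟩)
    · -- red
      obtain ⟨hτe, hσe, hne, t, ht, hτt, hσt⟩ := hL
      simp only [Set.mem_setOf_eq] at *
      subst hk
      refine ⟨fun hh => hne (ed_inj _ hh), by rw [ed_card]; exact hτe.1,
        by rw [ed_card]; exact hσe.1, t, ht, k, ed_mono k hτt, ed_mono k hσt⟩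
    · -- blue-red
      obtain ⟨hτe, hσe, hne, t, ht, hτt, hσt⟩ := hL
      simp only [Set.mem_setOf_eq] at *
      subst hk
      -- a'*b' = a*b
      have hprod : a' * b' = a * b := by
        rcases pair_cases hab hτ' with ⟨h1, h2⟩ | ⟨h1, h2⟩
        · rw [h1, h2]
        · rw [h1, h2]; exact (hB a b hp).symm
      have hshift : ed g ({a,b} : Finset G) = ed (a'*b'*g) (({a,b} : Finset G).image (·⁻¹)) := by
        rw [hprod]; exact ed_shift hB hp g
      refine ⟨?_, by rw [ed_card]; exact hp.1, by rw [ed_card]; exact hσe.1,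
        t, ht, a'*b'*g, ?_, ed_mono _ hσt⟩
      · rw [hshift]
        intro hh
        exact hne (ed_inj _ hh)
      · rw [hshift]
        exact ed_mono _ hτt
  · -- InjOn
    rintro ⟨k, σ⟩ hq ⟨k', σ'⟩ hq' hee
    simp only [Set.mem_setOf_eq] at hq hq' hee
    have hσe : σ ∈ edgesOf tri := by
      rcases hq with ⟨-, hL⟩ | ⟨-, -, -, -, hL⟩ <;> exact hL.2.1
    have hσe' : σ' ∈ edgesOf tri := by
      rcases hq' with ⟨-, hL⟩ | ⟨-, -, -, -, hL⟩ <;> exact hL.2.1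
    rcases fiber_lemma hB hD hσe hσe' hee with ⟨hk, hσ⟩ | ⟨u, v, hσuv, hk, hσ⟩
    · exact Prod.ext hk.symm hσ.symm
    · -- twin case: derive contradiction
      exfalso
      have huv1 : u * v ≠ 1 := edge_prod_ne_one h0 (hσuv ▸ hσe)
      rcases hq with ⟨hk1, hL⟩ | ⟨a1, b1, hτ1, hk1, hL⟩ <;>
        rcases hq' with ⟨hk1', hL'⟩ | ⟨a1', b1', hτ1', hk1', hL'⟩ <;>
        simp only at *
      · -- both red: k = g, k' = g, k' = u*v*k
        apply huv1
        have : u * v * g = g := by rw [hk1] at hk; rw [← hk]; exact hk1'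
        exact mul_right_cancel (by rw [this, one_mul])
      · -- q red, q' blue
        -- k = g, k' = a1'*b1'*g with {a1',b1'} = {a,b}, and k' = u*v*k, σ = {u,v}
        obtain ⟨hτe, -, hne, t, ht, hτt, hσt⟩ := hL
        have hprod' : a1' * b1' = a * b := by
          rcases pair_cases hab hτ1' with ⟨h1, h2⟩ | ⟨h1, h2⟩
          · rw [h1, h2]
          · rw [h1, h2]; exact (hB a b hp).symm
        have hprod2 : a * b = u * v := by
          have h1 : k' = a1' * b1' * g := hk1'
          have h2 : k' = u * v * g := by rw [hk, hk1]
          have := h1.symm.trans h2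
          rw [hprod'] at this
          exact mul_right_cancel this
        have := same_prod h3 hB hp (hσuv ▸ hσe) ht hτt (hσuv ▸ hσt) hprod2
        exact hne (this.trans hσuv.symm)
      · -- q blue, q' red
        obtain ⟨hτe, hσ'edge, hne, t, ht, hτt, hσ't⟩ := hL'
        have hprod' : a1 * b1 = a * b := by
          rcases pair_cases hab hτ1 with ⟨h1, h2⟩ | ⟨h1, h2⟩
          · rw [h1, h2]
          · rw [h1, h2]; exact (hB a b hp).symm
        have hσ'uv : σ' = ({u⁻¹, v⁻¹} : Finset G) := by rw [hσ, hσuv, inv'_pair]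
        have hinv_e : ({u⁻¹, v⁻¹} : Finset G) ∈ edgesOf tri := hC u v (hσuv ▸ hσe)
        have h7 : g = u * v * (a1 * b1 * g) := by rw [← hk1, ← hk, hk1']
        rw [hprod'] at h7
        have hgg : u * v * (a * b) * g = g := by rw [mul_assoc (u*v) (a*b) g, ← h7]
        have h8 : u * v * (a * b) = 1 := mul_right_cancel (by rw [hgg, one_mul])
        have hprod2 : a * b = u⁻¹ * v⁻¹ := by
          rw [← inv_eq_of_mul_eq_one_right h8, mul_inv_rev, ← hB u⁻¹ v⁻¹ hinv_e]
        have := same_prod h3 hB hp hinv_e ht hτt (hσ'uv ▸ hσ't) hprod2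
        exact hne (this.trans hσ'uv.symm)
      · -- both blue
        apply huv1
        have hprod1 : a1 * b1 = a * b := by
          rcases pair_cases hab hτ1 with ⟨h1, h2⟩ | ⟨h1, h2⟩
          · rw [h1, h2]
          · rw [h1, h2]; exact (hB a b hp).symm
        have hprod1' : a1' * b1' = a * b := by
          rcases pair_cases hab hτ1' with ⟨h1, h2⟩ | ⟨h1, h2⟩
          · rw [h1, h2]
          · rw [h1, h2]; exact (hB a b hp).symm
        have : u * v * k = k := by
          rw [← hk, hk1', hk1, hprod1, hprod1']
        exact mul_right_cancel (by rw [this, one_mul])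
  · -- SurjOn
    rintro e' ⟨hne, hc1, hc2, t, ht, h, hsub1, hsub2⟩
    obtain ⟨σ₀, hσ₀t, hσ₀⟩ := subset_ed hsub1
    obtain ⟨σ', hσ't, hσ'⟩ := subset_ed hsub2
    have hσ₀e : σ₀ ∈ edgesOf tri := by
      constructor
      · rw [← ed_card h σ₀, ← hσ₀]; exact hc1
      · exact ⟨t, ht, hσ₀t⟩
    have hσ'e : σ' ∈ edgesOf tri := by
      constructor
      · rw [← ed_card h σ', ← hσ']; exact hc2
      · exact ⟨t, ht, hσ't⟩
    rcases fiber_lemma hB hD hp hσ₀e hσ₀ with ⟨hg, hττ⟩ | ⟨u, v, hτuv, hg, hττ⟩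
    · -- h = g, σ₀ = τ
      subst hg
      refine ⟨(h, σ'), ?_, ?_⟩
      · left
        refine ⟨rfl, hp, hσ'e, ?_, t, ht, hττ ▸ hσ₀t, hσ't⟩
        intro hcon
        exact hne (by rw [hcon, ← hσ'])
      · simp only
        exact hσ'.symm
    · -- h = u*v*g, σ₀ = image inv τ
      refine ⟨(h, σ'), ?_, ?_⟩
      · right
        refine ⟨u, v, hτuv, hg, ?_, hσ'e, ?_, t, ht, hττ ▸ hσ₀t, hσ't⟩
        · exact inv'_edge hC hp
        · intro hcon
          apply hne
          rw [hcon] at hττ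
          rw [hσ₀, hττ, ← hσ']
      · simp only
        exact hσ'.symm

end Aux2

section Aux3
variable {G : Type*} [Group G] [DecidableEq G] [Fintype G] {tri : Set (Finset G)} {d : ℕ}

lemma zigAdj_snd_mem {p q : G × Finset G} (h : zigAdj tri p q) : q.2 ∈ edgesOf tri := by
  rcases h with ⟨-, hL⟩ | ⟨-, -, -, -, hL⟩ <;> exact hL.2.1

noncomputable def Emap (tri : Set (Finset G)) : zigVerts tri → cWalkVerts tri :=
  fun q => ⟨ed q.1.1 q.1.2, ⟨q.1.2, q.2, q.1.1, rfl⟩⟩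

lemma Emap_surj : Function.Surjective (Emap tri) := by
  rintro ⟨e, τ, hτ, g, rfl⟩
  exact ⟨⟨(g, τ), hτ⟩, rfl⟩

lemma ed_one (τ : Finset G) : ed 1 τ = τ := by simp [ed]

lemma Emap_fiber (h0 : ∀ a b : G, ({a, b} : Finset G) ∈ edgesOf tri → b ≠ a⁻¹)
    (hB : ∀ a b : G, ({a, b} : Finset G) ∈ edgesOf tri → a * b = b * a)
    (hC : ∀ a b : G, ({a, b} : Finset G) ∈ edgesOf tri →
      ({a⁻¹, b⁻¹} : Finset G) ∈ edgesOf tri)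
    (hD : ∀ a b a' b' : G, ({a, b} : Finset G) ∈ edgesOf tri →
      ({a', b'} : Finset G) ∈ edgesOf tri → (a, b) ≠ (a', b') →
      a * b⁻¹ = a' * b'⁻¹ → b' = a⁻¹ ∧ a' = b⁻¹)
    (e : cWalkVerts tri) :
    (Finset.univ.filter (fun q : zigVerts tri => Emap tri q = e)).card = 2 := by
  obtain ⟨τ, hτ, g, he⟩ := e.2
  obtain ⟨a, b, hab, rfl⟩ := edge_decomp hτ
  have hab1 : a * b ≠ 1 := edge_prod_ne_one h0 hτ
  have hinv : ({a⁻¹, b⁻¹} : Finset G) ∈ edgesOf tri := hC a b hτ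
  set q1 : zigVerts tri := ⟨(g, {a,b}), hτ⟩ with hq1
  set q2 : zigVerts tri := ⟨(a*b*g, {a⁻¹,b⁻¹}), hinv⟩ with hq2
  have hne : q1 ≠ q2 := by
    intro h
    have h' := congrArg (fun q : zigVerts tri => q.1.1) h
    simp only [hq1, hq2] at h'
    exact hab1 (mul_right_cancel (b := g) (show a*b*g = 1*g by rw [one_mul, ← h']))
  have hfil : (Finset.univ.filter (fun q : zigVerts tri => Emap tri q = e)) = {q1, q2} := by
    ext q
    simp only [Finset.mem_filter, Finset.mem_univ, true_and, Finset.mem_insert,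
      Finset.mem_singleton]
    constructor
    · intro hq
      have hq' : ed g ({a,b} : Finset G) = ed q.1.1 q.1.2 := by
        rw [← he]
        exact (congrArg Subtype.val hq).symm
      rcases fiber_lemma hB hD hτ q.2 hq' with ⟨h1, h2⟩ | ⟨u, v, huv, h1, h2⟩
      · left
        exact Subtype.ext (Prod.ext h1.symm h2.symm).symm
      · right
        have huvab : u * v = a * b := by
          rcases pair_cases hab huv with ⟨h3, h4⟩ | ⟨h3, h4⟩
          · rw [h3, h4]
          · rw [h3, h4]; exact (hB a b hτ).symm
        apply Subtype.ext
        apply Prod.ext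
        · rw [h1, huvab]
        · rw [h2, inv'_pair]
    · rintro (rfl | rfl)
      · exact Subtype.ext he.symm
      · apply Subtype.ext
        show ed (a*b*g) ({a⁻¹, b⁻¹} : Finset G) = _
        rw [he]
        rw [ed_shift hB hτ g, inv'_pair]
  rw [hfil, Finset.card_pair hne]

lemma sum_comp_Emap (h0 : ∀ a b : G, ({a, b} : Finset G) ∈ edgesOf tri → b ≠ a⁻¹)
    (hB : ∀ a b : G, ({a, b} : Finset G) ∈ edgesOf tri → a * b = b * a)
    (hC : ∀ a b : G, ({a, b} : Finset G) ∈ edgesOf tri →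
      ({a⁻¹, b⁻¹} : Finset G) ∈ edgesOf tri)
    (hD : ∀ a b a' b' : G, ({a, b} : Finset G) ∈ edgesOf tri →
      ({a', b'} : Finset G) ∈ edgesOf tri → (a, b) ≠ (a', b') →
      a * b⁻¹ = a' * b'⁻¹ → b' = a⁻¹ ∧ a' = b⁻¹)
    (x : cWalkVerts tri → ℝ) :
    (∑ q : zigVerts tri, x (Emap tri q)) = 2 * ∑ e : cWalkVerts tri, x e := by
  rw [← Finset.sum_fiberwise_of_maps_to (g := Emap tri)
    (fun q _ => Finset.mem_univ (Emap tri q)) (fun q => x (Emap tri q))]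
  rw [Finset.mul_sum]
  apply Finset.sum_congr rfl
  intro e _
  have hconst : ∀ q ∈ Finset.univ.filter (fun q : zigVerts tri => Emap tri q = e),
      x (Emap tri q) = x e := by
    intro q hq
    rw [(Finset.mem_filter.mp hq).2]
  rw [Finset.sum_congr rfl hconst, Finset.sum_const, Emap_fiber h0 hB hC hD e]
  rw [nsmul_eq_mul]
  norm_num

end Aux3

section Aux4
variable {G : Type*} [Group G] [DecidableEq G] [Fintype G] {tri : Set (Finset G)} {d : ℕ}

lemma nbrs_card (h3 : ∀ t ∈ tri, t.card = 3)
    (hA : ∀ e ∈ edgesOf tri, Set.ncard {t | t ∈ tri ∧ e ⊆ t} = d)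
    {τ : Finset G} (hτ : τ ∈ edgesOf tri) :
    (Finset.univ.filter fun σ : Finset G => Ladj tri τ σ).card = 2 * d := by
  have hfin : {t | t ∈ tri ∧ τ ⊆ t}.Finite := Set.toFinite _
  have hTcard : hfin.toFinset.card = d := by
    rw [← Set.ncard_eq_toFinset_card _ hfin]
    exact hA τ hτ
  have heq : (Finset.univ.filter fun σ : Finset G => Ladj tri τ σ)
      = hfin.toFinset.biUnion (fun t => (Finset.powersetCard 2 t).erase τ) := by
    ext σ
    simp only [Finset.mem_filter, Finset.mem_univ, true_and, Finset.mem_biUnion,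
      Set.Finite.mem_toFinset, Set.mem_setOf_eq, Finset.mem_erase, Finset.mem_powersetCard]
    constructor
    · rintro ⟨-, hσe, hne, t, ht, hτt, hσt⟩
      exact ⟨t, ⟨ht, hτt⟩, Ne.symm hne, hσt, hσe.1⟩
    · rintro ⟨t, ⟨ht, hτt⟩, hne, hσt, hc⟩
      exact ⟨hτ, ⟨hc, t, ht, hσt⟩, Ne.symm hne, t, ht, hτt, hσt⟩
  have hdisj : ∀ t1 ∈ hfin.toFinset, ∀ t2 ∈ hfin.toFinset, t1 ≠ t2 →
      Disjoint ((Finset.powersetCard 2 t1).erase τ) ((Finset.powersetCard 2 t2).erase τ) := by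
    intro t1 ht1 t2 ht2 hne12
    rw [Set.Finite.mem_toFinset, Set.mem_setOf_eq] at ht1 ht2
    rw [Finset.disjoint_left]
    intro σ hσ1 hσ2
    simp only [Finset.mem_erase, Finset.mem_powersetCard] at hσ1 hσ2
    obtain ⟨hσne, hσt1, hσc⟩ := hσ1
    obtain ⟨-, hσt2, -⟩ := hσ2
    have hsub1 : τ ∪ σ ⊆ t1 := Finset.union_subset ht1.2 hσt1
    have hsub2 : τ ∪ σ ⊆ t2 := Finset.union_subset ht2.2 hσt2
    have hc3 : 3 ≤ (τ ∪ σ).card := by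
      by_contra hlt
      push_neg at hlt
      have hτu : τ ⊆ τ ∪ σ := Finset.subset_union_left
      have heq2 : τ ∪ σ = τ :=
        (Finset.eq_of_subset_of_card_le hτu (by rw [hτ.1]; omega)).symm
      have hστ : σ ⊆ τ := heq2 ▸ Finset.subset_union_right
      exact hσne (Finset.eq_of_subset_of_card_le hστ (by rw [hσc, hτ.1]))
    have ht1e : t1 = τ ∪ σ :=
      (Finset.eq_of_subset_of_card_le hsub1 (by rw [h3 t1 ht1.1]; exact hc3)).symm
    have ht2e : t2 = τ ∪ σ :=
      (Finset.eq_of_subset_of_card_le hsub2 (by rw [h3 t2 ht2.1]; exact hc3)).symm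
    exact hne12 (ht1e.trans ht2e.symm)
  rw [heq, Finset.card_biUnion hdisj]
  have herase : ∀ t ∈ hfin.toFinset, ((Finset.powersetCard 2 t).erase τ).card = 2 := by
    intro t ht
    rw [Set.Finite.mem_toFinset, Set.mem_setOf_eq] at ht
    have hmem : τ ∈ Finset.powersetCard 2 t :=
      Finset.mem_powersetCard.mpr ⟨ht.2, hτ.1⟩
    rw [Finset.card_erase_of_mem hmem, Finset.card_powersetCard, h3 t ht.1]
    decide
  rw [Finset.sum_congr rfl herase, Finset.sum_const, hTcard, smul_eq_mul]
  omega

lemma zig_deg (h3 : ∀ t ∈ tri, t.card = 3)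
    (hA : ∀ e ∈ edgesOf tri, Set.ncard {t | t ∈ tri ∧ e ⊆ t} = d)
    (h0 : ∀ a b : G, ({a, b} : Finset G) ∈ edgesOf tri → b ≠ a⁻¹)
    (hB : ∀ a b : G, ({a, b} : Finset G) ∈ edgesOf tri → a * b = b * a)
    (hC : ∀ a b : G, ({a, b} : Finset G) ∈ edgesOf tri →
      ({a⁻¹, b⁻¹} : Finset G) ∈ edgesOf tri)
    (p : zigVerts tri) :
    (Finset.univ.filter fun q : zigVerts tri => zigAdj tri p.1 q.1).card = 4 * d := by
  obtain ⟨⟨g, τ⟩, hp⟩ := p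
  simp only at hp
  obtain ⟨a, b, hab, rfl⟩ := edge_decomp hp
  have hab1 : a * b ≠ 1 := edge_prod_ne_one h0 hp
  have hinv : ({a⁻¹, b⁻¹} : Finset G) ∈ edgesOf tri := hC a b hp
  set S : Finset (G × Finset G) :=
    ((Finset.univ.filter (fun σ : Finset G => Ladj tri ({a,b} : Finset G) σ)).image
        (fun σ => ((g : G), σ))) ∪
      ((Finset.univ.filter (fun σ : Finset G =>
          Ladj tri (({a,b} : Finset G).image (·⁻¹)) σ)).image
        (fun σ => (a*b*g, σ))) with hS
  have hcard : S.card = 4 * d := by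
    rw [hS, Finset.card_union_of_disjoint, Finset.card_image_of_injective _ (Prod.mk_right_injective _),
      Finset.card_image_of_injective _ (Prod.mk_right_injective _), nbrs_card h3 hA hp,
      nbrs_card h3 hA (by rw [inv'_pair]; exact hinv)]
    · omega
    · rw [Finset.disjoint_left]
      rintro x hx1 hx2
      simp only [Finset.mem_image, Finset.mem_filter, Finset.mem_univ, true_and] at hx1 hx2
      obtain ⟨σ1, -, he1⟩ := hx1
      obtain ⟨σ2, -, he2⟩ := hx2
      have : g = a * b * g := by
        rw [← he2] at he1
        exact (Prod.ext_iff.mp he1).1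
      exact hab1 (mul_right_cancel (b := g) (show a*b*g = 1*g by rw [one_mul, ← this]))
  rw [← hcard]
  apply Finset.card_bij (fun (q : zigVerts tri) _ => q.1)
  · intro q hq
    rw [Finset.mem_filter] at hq
    have hq' := hq.2
    rw [hS, Finset.mem_union]
    rcases hq' with ⟨hk, hL⟩ | ⟨a', b', hτ', hk, hL⟩
    · left
      simp only [Finset.mem_image, Finset.mem_filter, Finset.mem_univ, true_and]
      exact ⟨q.1.2, hL, Prod.ext hk.symm rfl⟩
    · right
      simp only [Finset.mem_image, Finset.mem_filter, Finset.mem_univ, true_and]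
      refine ⟨q.1.2, hL, Prod.ext ?_ rfl⟩
      rw [hk]
      simp only
      rcases pair_cases hab hτ' with ⟨h1, h2⟩ | ⟨h1, h2⟩
      · rw [h1, h2]
      · rw [h1, h2, hB a b hp]
  · intro q1 hq1 q2 hq2 h
    exact Subtype.ext h
  · intro x hx
    rw [hS, Finset.mem_union] at hx
    have hadj : zigAdj tri (g, ({a,b} : Finset G)) x := by
      rcases hx with hx | hx <;>
        simp only [Finset.mem_image, Finset.mem_filter, Finset.mem_univ, true_and] at hx
      · obtain ⟨σ, hσ, rfl⟩ := hx
        exact Or.inl ⟨rfl, hσ⟩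
      · obtain ⟨σ, hσ, rfl⟩ := hx
        exact Or.inr ⟨a, b, rfl, rfl, hσ⟩
    exact ⟨⟨x, zigAdj_snd_mem hadj⟩, Finset.mem_filter.mpr ⟨Finset.mem_univ _, hadj⟩, rfl⟩

end Aux4

section Aux5
variable {G : Type*} [Group G] [DecidableEq G] [Fintype G] {tri : Set (Finset G)} {d : ℕ}

lemma nbhd_sum_bij (h3 : ∀ t ∈ tri, t.card = 3)
    (h0 : ∀ a b : G, ({a, b} : Finset G) ∈ edgesOf tri → b ≠ a⁻¹)
    (hB : ∀ a b : G, ({a, b} : Finset G) ∈ edgesOf tri → a * b = b * a)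
    (hC : ∀ a b : G, ({a, b} : Finset G) ∈ edgesOf tri →
      ({a⁻¹, b⁻¹} : Finset G) ∈ edgesOf tri)
    (hD : ∀ a b a' b' : G, ({a, b} : Finset G) ∈ edgesOf tri →
      ({a', b'} : Finset G) ∈ edgesOf tri → (a, b) ≠ (a', b') →
      a * b⁻¹ = a' * b'⁻¹ → b' = a⁻¹ ∧ a' = b⁻¹)
    (p : zigVerts tri) (x : cWalkVerts tri → ℝ) :
    ∑ q ∈ Finset.univ.filter (fun q : zigVerts tri => zigAdj tri p.1 q.1), x (Emap tri q)
      = ∑ f ∈ Finset.univ.filter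
          (fun f : cWalkVerts tri => walkAdj tri (Emap tri p).1 f.1), x f := by
  have hbij := bijOn_lift h3 h0 hB hC hD p.1 p.2
  apply Finset.sum_bij (fun (q : zigVerts tri) _ => Emap tri q)
  · intro q hq
    rw [Finset.mem_filter] at hq ⊢
    exact ⟨Finset.mem_univ _, hbij.1 hq.2⟩
  · intro q1 hq1 q2 hq2 h
    rw [Finset.mem_filter] at hq1 hq2
    have := hbij.2.1 hq1.2 hq2.2 (congrArg Subtype.val h)
    exact Subtype.ext this
  · intro f hf
    rw [Finset.mem_filter] at hf
    obtain ⟨q0, hq0, he0⟩ := hbij.2.2 hf.2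
    exact ⟨⟨q0, zigAdj_snd_mem hq0⟩, Finset.mem_filter.mpr ⟨Finset.mem_univ _, hq0⟩,
      Subtype.ext he0⟩
  · intro q hq
    rfl

lemma walk_deg (h3 : ∀ t ∈ tri, t.card = 3)
    (hA : ∀ e ∈ edgesOf tri, Set.ncard {t | t ∈ tri ∧ e ⊆ t} = d)
    (h0 : ∀ a b : G, ({a, b} : Finset G) ∈ edgesOf tri → b ≠ a⁻¹)
    (hB : ∀ a b : G, ({a, b} : Finset G) ∈ edgesOf tri → a * b = b * a)
    (hC : ∀ a b : G, ({a, b} : Finset G) ∈ edgesOf tri →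
      ({a⁻¹, b⁻¹} : Finset G) ∈ edgesOf tri)
    (hD : ∀ a b a' b' : G, ({a, b} : Finset G) ∈ edgesOf tri →
      ({a', b'} : Finset G) ∈ edgesOf tri → (a, b) ≠ (a', b') →
      a * b⁻¹ = a' * b'⁻¹ → b' = a⁻¹ ∧ a' = b⁻¹)
    (e : cWalkVerts tri) :
    (Finset.univ.filter fun f : cWalkVerts tri => walkAdj tri e.1 f.1).card = 4 * d := by
  obtain ⟨p, rfl⟩ := Emap_surj (tri := tri) e
  have h1 := nbhd_sum_bij h3 h0 hB hC hD p (fun _ => (1 : ℝ))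
  simp only [Finset.sum_const, nsmul_eq_mul, mul_one] at h1
  have h2 := zig_deg h3 hA h0 hB hC p
  have : ((Finset.univ.filter fun f : cWalkVerts tri =>
      walkAdj tri (Emap tri p).1 f.1).card : ℝ) = ((4 * d : ℕ) : ℝ) := by
    rw [← h1, h2]
  exact_mod_cast this

lemma exists_two_cWalk (h3 : ∀ t ∈ tri, t.card = 3)
    {τ : Finset G} (hτ : τ ∈ edgesOf tri) :
    ∃ e f : cWalkVerts tri, e ≠ f := by
  obtain ⟨a, b, hab, rfl⟩ := edge_decomp hτ
  obtain ⟨hc2, t, ht, hsub⟩ := hτ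
  have htne : ({a,b} : Finset G) ≠ t := by
    intro h
    rw [h, h3 t ht] at hc2
    omega
  obtain ⟨c, hct, hcn⟩ := Finset.exists_of_ssubset (hsub.ssubset_of_ne htne)
  simp only [Finset.mem_insert, Finset.mem_singleton, not_or] at hcn
  obtain ⟨hca, hcb⟩ := hcn
  have hedge2 : ({a, c} : Finset G) ∈ edgesOf tri := by
    refine ⟨Finset.card_pair (Ne.symm hca), t, ht, ?_⟩
    intro x hx
    simp only [Finset.mem_insert, Finset.mem_singleton] at hx
    rcases hx with rfl | rfl
    · exact hsub (by simp)
    · exact hct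
  have hτ' : ({a, b} : Finset G) ∈ edgesOf tri := ⟨hc2, t, ht, hsub⟩
  refine ⟨⟨{a,b}, {a,b}, hτ', 1, (ed_one _).symm⟩, ⟨{a,c}, {a,c}, hedge2, 1, (ed_one _).symm⟩, ?_⟩
  intro h
  have h' : ({a,b} : Finset G) = {a,c} := congrArg Subtype.val h
  have : b ∈ ({a,c} : Finset G) := h' ▸ (by simp)
  simp only [Finset.mem_insert, Finset.mem_singleton] at this
  rcases this with rfl | rfl
  · exact hab rfl
  · exact hcb rfl

lemma eig_subset (h3 : ∀ t ∈ tri, t.card = 3)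
    (h0 : ∀ a b : G, ({a, b} : Finset G) ∈ edgesOf tri → b ≠ a⁻¹)
    (hB : ∀ a b : G, ({a, b} : Finset G) ∈ edgesOf tri → a * b = b * a)
    (hC : ∀ a b : G, ({a, b} : Finset G) ∈ edgesOf tri →
      ({a⁻¹, b⁻¹} : Finset G) ∈ edgesOf tri)
    (hD : ∀ a b a' b' : G, ({a, b} : Finset G) ∈ edgesOf tri →
      ({a', b'} : Finset G) ∈ edgesOf tri → (a, b) ≠ (a', b') →
      a * b⁻¹ = a' * b'⁻¹ → b' = a⁻¹ ∧ a' = b⁻¹) :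
    {μ : ℝ | ∃ x : cWalkVerts tri → ℝ, x ≠ 0 ∧ (∑ v, x v) = 0 ∧
        (cWalkMat tri).mulVec x = μ • x} ⊆
    {μ : ℝ | ∃ y : zigVerts tri → ℝ, y ≠ 0 ∧ (∑ v, y v) = 0 ∧
        (zigMat tri).mulVec y = μ • y} := by
  rintro μ ⟨x, hx0, hxs, hxe⟩
  refine ⟨fun q => x (Emap tri q), ?_, ?_, ?_⟩
  · obtain ⟨f, hf⟩ := Function.ne_iff.mp hx0
    obtain ⟨q, rfl⟩ := Emap_surj f
    exact Function.ne_iff.mpr ⟨q, hf⟩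
  · rw [sum_comp_Emap h0 hB hC hD, hxs, mul_zero]
  · funext p
    have lhs_eq : ((zigMat tri).mulVec (fun q => x (Emap tri q))) p
        = ∑ q ∈ Finset.univ.filter (fun q : zigVerts tri => zigAdj tri p.1 q.1),
            x (Emap tri q) := by
      simp only [Matrix.mulVec, dotProduct, zigMat]
      rw [Finset.sum_filter]
      apply Finset.sum_congr rfl
      intro q _
      by_cases h : zigAdj tri p.1 q.1 <;> simp [h]
    have rhs_eq : ((cWalkMat tri).mulVec x) (Emap tri p)
        = ∑ f ∈ Finset.univ.filter
            (fun f : cWalkVerts tri => walkAdj tri (Emap tri p).1 f.1), x f := by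
      simp only [Matrix.mulVec, dotProduct, cWalkMat]
      rw [Finset.sum_filter]
      apply Finset.sum_congr rfl
      intro f _
      by_cases h : walkAdj tri (Emap tri p).1 f.1 <;> simp [h]
    show ((zigMat tri).mulVec (fun q => x (Emap tri q))) p = μ * x (Emap tri p)
    rw [lhs_eq, nbhd_sum_bij h3 h0 hB hC hD p x, ← rhs_eq, hxe]
    rfl

end Aux5

lemma abs_bound_of_eigen {n : Type*} [Fintype n] (A : Matrix n n ℝ)
    (hA : ∀ i j, |A i j| ≤ 1) {μ : ℝ} {x : n → ℝ} (hx : x ≠ 0)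
    (heig : A.mulVec x = μ • x) : |μ| ≤ Fintype.card n := by
  classical
  have hne : (Finset.univ : Finset n).Nonempty := by
    rcases Function.ne_iff.mp hx with ⟨i, hi⟩
    exact ⟨i, Finset.mem_univ i⟩
  obtain ⟨i, -, hi⟩ := Finset.exists_max_image Finset.univ (fun i => |x i|) hne
  have hxi : 0 < |x i| := by
    rcases Function.ne_iff.mp hx with ⟨j, hj⟩
    have := hi j (Finset.mem_univ j)
    have hj' : 0 < |x j| := abs_pos.mpr hj
    linarith
  have key : |μ| * |x i| ≤ (Fintype.card n : ℝ) * |x i| := by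
    have h1 : |μ| * |x i| = |(A.mulVec x) i| := by
      rw [heig]; simp [abs_mul]
    rw [h1]
    have h2 : |(A.mulVec x) i| ≤ ∑ j, |A i j * x j| := by
      simpa [Matrix.mulVec, dotProduct] using
        Finset.abs_sum_le_sum_abs (fun j => A i j * x j) Finset.univ
    have h3 : ∀ j, |A i j * x j| ≤ |x i| := by
      intro j
      rw [abs_mul]
      calc |A i j| * |x j| ≤ 1 * |x j| :=
            mul_le_mul_of_nonneg_right (hA i j) (abs_nonneg _)
        _ = |x j| := one_mul _
        _ ≤ |x i| := hi j (Finset.mem_univ j)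
    calc |(A.mulVec x) i| ≤ ∑ j, |A i j * x j| := h2
      _ ≤ ∑ _j : n, |x i| := Finset.sum_le_sum (fun j _ => h3 j)
      _ = (Fintype.card n : ℝ) * |x i| := by
          rw [Finset.sum_const, Finset.card_univ, nsmul_eq_mul]
  exact le_of_mul_le_mul_right key hxi

lemma exists_sumzero_eigen {n : Type*} [Fintype n] (A : Matrix n n ℝ)
    (hsym : ∀ i j, A i j = A j i) (r : ℝ) (hcol : ∀ j, ∑ i, A i j = r)
    (i0 j0 : n) (hij : i0 ≠ j0) :
    ∃ μ : ℝ, ∃ x : n → ℝ, x ≠ 0 ∧ (∑ v, x v) = 0 ∧ A.mulVec x = μ • x := by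
  classical
  let T : EuclideanSpace ℝ n →ₗ[ℝ] EuclideanSpace ℝ n :=
    { toFun := fun x => WithLp.toLp 2 (A.mulVec x)
      map_add' := fun x y => by
        show WithLp.toLp 2 (A.mulVec (x + y)) = WithLp.toLp 2 (A.mulVec x) + WithLp.toLp 2 (A.mulVec y)
        rw [Matrix.mulVec_add]; rfl
      map_smul' := fun c x => by
        show WithLp.toLp 2 (A.mulVec (c • x)) = c • WithLp.toLp 2 (A.mulVec x)
        rw [Matrix.mulVec_smul]; rfl }
  let ℓ : EuclideanSpace ℝ n →ₗ[ℝ] ℝ :=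
    { toFun := fun x => ∑ v, x v
      map_add' := fun x y => by
        show (∑ v, (x v + y v)) = _
        rw [Finset.sum_add_distrib]
      map_smul' := fun c x => by
        show (∑ v, c * x v) = c * ∑ v, x v
        rw [Finset.mul_sum] }
  have hU : ∀ x ∈ LinearMap.ker ℓ, T x ∈ LinearMap.ker ℓ := by
    intro x hx
    rw [LinearMap.mem_ker] at hx ⊢
    show (∑ v, (A.mulVec x) v) = 0
    have : (∑ v, (A.mulVec x) v) = ∑ j, (∑ i, A i j) * x j := by
      simp only [Matrix.mulVec, dotProduct]
      rw [Finset.sum_comm]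
      congr 1
      ext j
      rw [Finset.sum_mul]
    rw [this]
    have hx' : (∑ v, x v) = 0 := hx
    calc (∑ j, (∑ i, A i j) * x j) = ∑ j, r * x j := by
          apply Finset.sum_congr rfl
          intro j _
          rw [hcol j]
      _ = r * ∑ j, x j := by rw [Finset.mul_sum]
      _ = 0 := by rw [hx', mul_zero]
  have inner_eq : ∀ u w : EuclideanSpace ℝ n, (inner ℝ u w : ℝ) = ∑ i, u i * w i := by
    intro u w
    simp [PiLp.inner_apply, RCLike.inner_apply]
    exact Finset.sum_congr rfl fun i _ => mul_comm _ _
  have hTsym : T.IsSymmetric := by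
    intro x y
    rw [inner_eq, inner_eq]
    show (∑ i, (A.mulVec x) i * y i) = ∑ i, x i * (A.mulVec y) i
    simp only [Matrix.mulVec, dotProduct, Finset.sum_mul, Finset.mul_sum]
    rw [Finset.sum_comm]
    apply Finset.sum_congr rfl; intro j _
    apply Finset.sum_congr rfl; intro i _
    rw [hsym j i]; ring
  let z : EuclideanSpace ℝ n := WithLp.toLp 2 fun v => (if v = i0 then (1:ℝ) else 0) - (if v = j0 then 1 else 0)
  have hz0 : z i0 = 1 := by simp [z, hij]
  have hzmem : z ∈ LinearMap.ker ℓ := by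
    rw [LinearMap.mem_ker]
    show (∑ v, z v) = 0
    simp [z, Finset.sum_sub_distrib]
  haveI hsub : Nontrivial (LinearMap.ker ℓ) := by
    refine nontrivial_of_ne ⟨z, hzmem⟩ 0 ?_
    intro h
    have h2 : z i0 = 0 := by
      have := congrArg (fun w : LinearMap.ker ℓ => (w : EuclideanSpace ℝ n) i0) h
      simpa using this
    rw [hz0] at h2; exact one_ne_zero h2
  let T' := T.restrict hU
  have hT'sym : T'.IsSymmetric := hTsym.restrict_invariant hU
  obtain ⟨μ, hμ⟩ : ∃ μ, Module.End.HasEigenvalue T' μ :=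
    ⟨_, hT'sym.hasEigenvalue_iSup_of_finiteDimensional⟩
  obtain ⟨v, hv⟩ := hμ.exists_hasEigenvector
  have hveq : T (v : EuclideanSpace ℝ n) = μ • (v : EuclideanSpace ℝ n) := by
    have h1 := Module.End.mem_eigenspace_iff.mp hv.1
    have h2 : ((T' v : LinearMap.ker ℓ) : EuclideanSpace ℝ n) = T (v : EuclideanSpace ℝ n) := rfl
    rw [← h2, h1]
    rfl
  refine ⟨μ, (v : EuclideanSpace ℝ n).ofLp, ?_, ?_, congrArg WithLp.ofLp hveq⟩
  · intro hcon
    exact hv.2 (Subtype.ext (WithLp.ofLp_injective 2 (by rw [hcon]; rfl)))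
  · have := v.2
    rw [LinearMap.mem_ker] at this
    exact this

section Aux7
variable {G : Type*} [Group G] [DecidableEq G] [Fintype G] {tri : Set (Finset G)}

lemma walkAdj_symm {e f : Finset G} (h : walkAdj tri e f) : walkAdj tri f e := by
  obtain ⟨hne, c1, c2, t, ht, g, s1, s2⟩ := h
  exact ⟨hne.symm, c2, c1, t, ht, g, s2, s1⟩

end Aux7

/-- In a CTS `C = CTS[S,G]`, the graph `G_zig` is a lift of `G_walk(C)`:
`E` maps the `G_zig`-neighborhood of every vertex bijectively onto the
`G_walk`-neighborhood of its image. Consequently `λ(G_walk(C)) ≤ λ(G_zig)`. -/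
theorem zig_is_lift_of_walk {G : Type*} [Group G] [DecidableEq G] [Fintype G]
    (tri : Set (Finset G)) (d : ℕ)
    (h3 : ∀ t ∈ tri, t.card = 3)
    (hA : ∀ e ∈ edgesOf tri, Set.ncard {t | t ∈ tri ∧ e ⊆ t} = d)
    (h0 : ∀ a b : G, ({a, b} : Finset G) ∈ edgesOf tri → b ≠ a⁻¹)
    (hB : ∀ a b : G, ({a, b} : Finset G) ∈ edgesOf tri → a * b = b * a)
    (hC : ∀ a b : G, ({a, b} : Finset G) ∈ edgesOf tri →
      ({a⁻¹, b⁻¹} : Finset G) ∈ edgesOf tri)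
    (hD : ∀ a b a' b' : G, ({a, b} : Finset G) ∈ edgesOf tri →
      ({a', b'} : Finset G) ∈ edgesOf tri → (a, b) ≠ (a', b') →
      a * b⁻¹ = a' * b'⁻¹ → b' = a⁻¹ ∧ a' = b⁻¹)
    (hE : ∀ x y : G, (∃ e ∈ edgesOf tri, x ∈ e) → (∃ e ∈ edgesOf tri, y ∈ e) →
      Relation.ReflTransGen (fun u v : G => ({u, v} : Finset G) ∈ edgesOf tri) x y) :
    (∀ p : G × Finset G, p.2 ∈ edgesOf tri →
      Set.BijOn (fun q : G × Finset G => ed q.1 q.2)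
        {q | zigAdj tri p q} {e | walkAdj tri (ed p.1 p.2) e}) ∧
    ntSup (cWalkMat tri) ≤ ntSup (zigMat tri) := by
  refine ⟨fun p hp => bijOn_lift h3 h0 hB hC hD p hp, ?_⟩
  unfold ntSup
  by_cases hemp : ∃ τ, τ ∈ edgesOf tri
  · obtain ⟨τ, hτ⟩ := hemp
    apply csSup_le_csSup
    · refine ⟨(Fintype.card (zigVerts tri) : ℝ), ?_⟩
      rintro μ ⟨y, hy0, -, hye⟩
      have hb := abs_bound_of_eigen (zigMat tri)
        (fun i j => by by_cases h : zigAdj tri i.1 j.1 <;> simp [zigMat, h]) hy0 hye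
      exact le_trans (le_abs_self μ) hb
    · obtain ⟨e0, f0, hef⟩ := exists_two_cWalk h3 hτ
      have hsym : ∀ i j : cWalkVerts tri, cWalkMat tri i j = cWalkMat tri j i := by
        intro i j
        simp only [cWalkMat]
        by_cases h : walkAdj tri i.1 j.1
        · rw [if_pos h, if_pos (walkAdj_symm h)]
        · rw [if_neg h, if_neg (fun h' => h (walkAdj_symm h'))]
      have hcol : ∀ j : cWalkVerts tri, ∑ i, cWalkMat tri i j = ((4*d : ℕ) : ℝ) := by
        intro j
        have h1 : ∑ i, cWalkMat tri i j = ∑ i, cWalkMat tri j i :=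
          Finset.sum_congr rfl (fun i _ => hsym i j)
        rw [h1]
        have h2 : ∑ i, cWalkMat tri j i
            = ((Finset.univ.filter fun f : cWalkVerts tri =>
                walkAdj tri j.1 f.1).card : ℝ) := by
          simp only [cWalkMat]
          rw [Finset.sum_boole]
        rw [h2, walk_deg h3 hA h0 hB hC hD j]
      obtain ⟨μ, x, hx0, hxs, hxe⟩ :=
        exists_sumzero_eigen (cWalkMat tri) hsym _ hcol e0 f0 hef
      exact ⟨μ, x, hx0, hxs, hxe⟩
    · exact eig_subset h3 h0 hB hC hD
  · have hzset : {μ : ℝ | ∃ y : zigVerts tri → ℝ, y ≠ 0 ∧ (∑ v, y v) = 0 ∧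
        (zigMat tri).mulVec y = μ • y} = ∅ := by
      ext μ
      simp only [Set.mem_setOf_eq, Set.mem_empty_iff_false, iff_false, not_exists]
      rintro y ⟨hy0, -, -⟩
      exact hy0 (funext fun v => (hemp ⟨v.1.2, v.2⟩).elim)
    have hwset : {μ : ℝ | ∃ x : cWalkVerts tri → ℝ, x ≠ 0 ∧ (∑ v, x v) = 0 ∧
        (cWalkMat tri).mulVec x = μ • x} = ∅ := by
      ext μ
      simp only [Set.mem_setOf_eq, Set.mem_empty_iff_false, iff_false, not_exists]
      rintro x ⟨hx0, -, -⟩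
      refine hx0 (funext fun e => ?_)
      obtain ⟨τ', hτ', -⟩ := e.2
      exact (hemp ⟨τ', hτ'⟩).elim
    rw [hzset, hwset]
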